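/- Let G_a and G_b be graphs on vertex set [n], and let π be an automorphism of the intersection graph G_a ∩ G_b (the graph with edge set E(G_a) ∩ E(G_b)). Let σ be the induced action of π on 2-element subsets of [n]. Then Δ(G_a ∘ σ, G_b) ≤ Δ(G_a, G_b), where Δ(G,H) is the size of the symmetric difference of the edge sets of G and H, and G_a ∘ σ denotes the graph whose edge indicator at e is the edge indicator of G_a at σ(e). -/

import Mathlib

/-- If `π` is an automorphism of the intersection graph `G_a ∩ G_b`, then applying the induced
permutation `σ` on vertex pairs to `G_a` cannot increase the symmetric difference with `G_b`.
Graphs on `[n]` are modeled as edge-indicator functions on 2-element subsets of `Fin n`. -/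
theorem stmt10 (n : ℕ) (Ga Gb : Finset (Fin n) → Bool) (π : Equiv.Perm (Fin n))
    (haut : ∀ s ∈ (Finset.univ : Finset (Fin n)).powersetCard 2,
      (Ga (s.image π) && Gb (s.image π)) = (Ga s && Gb s)) :
    ((((Finset.univ : Finset (Fin n)).powersetCard 2).filter
        (fun s => Ga (s.image π) ≠ Gb s)).card) ≤
      ((((Finset.univ : Finset (Fin n)).powersetCard 2).filter
        (fun s => Ga s ≠ Gb s)).card) := by
  classical
  have himg : ∀ s : Finset (Fin n),
      s ∈ (Finset.univ : Finset (Fin n)).powersetCard 2 →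
      s.image π ∈ (Finset.univ : Finset (Fin n)).powersetCard 2 := by
    intro s hs
    rw [Finset.mem_powersetCard_univ] at hs ⊢
    rw [Finset.card_image_of_injective _ π.injective]
    exact hs
  apply Finset.card_le_card_of_injOn (fun s => if Gb s then s else s.image π)
  · intro s hs
    simp only [Finset.mem_coe, Finset.mem_filter] at hs ⊢
    obtain ⟨hsP, hne⟩ := hs
    have hinv := haut s hsP
    by_cases hb : Gb s = true
    · rw [if_pos hb]
      refine ⟨hsP, ?_⟩
      have hga : Ga (s.image π) = false := by
        cases h : Ga (s.image π) with
        | false => rfl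
        | true => exact absurd (h.trans hb.symm) hne
      rw [hga] at hinv
      simp only [Bool.false_and] at hinv
      intro hcon
      rw [hb] at hcon
      rw [hcon, hb] at hinv
      simp at hinv
    · rw [if_neg hb]
      refine ⟨himg s hsP, ?_⟩
      have hb' : Gb s = false := by simpa using hb
      have hga : Ga (s.image π) = true := by
        cases h : Ga (s.image π) with
        | true => rfl
        | false => exact absurd (h.trans hb'.symm) hne
      rw [hga, hb'] at hinv
      simp only [Bool.true_and, Bool.and_false] at hinv
      rw [hga, hinv]
      simp
  · intro s hs t ht heq
    simp only [Finset.mem_coe, Finset.mem_filter] at hs ht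
    obtain ⟨hsP, hsne⟩ := hs
    obtain ⟨htP, htne⟩ := ht
    simp only at heq
    by_cases hbs : Gb s = true <;> by_cases hbt : Gb t = true
    · rwa [if_pos hbs, if_pos hbt] at heq
    · -- s = t.image π, Gb s = true, Gb t = false
      rw [if_pos hbs, if_neg hbt] at heq
      exfalso
      have hbt' : Gb t = false := by simpa using hbt
      have hgat : Ga (t.image π) = true := by
        cases h : Ga (t.image π) with
        | true => rfl
        | false => exact absurd (h.trans hbt'.symm) htne
      have hgas : Ga (s.image π) = false := by
        cases h : Ga (s.image π) with
        | false => rfl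
        | true => exact absurd (h.trans hbs.symm) hsne
      have hinv := haut s hsP
      rw [hgas, hbs] at hinv
      have : Ga s = true := heq ▸ hgat
      rw [this] at hinv
      simp at hinv
    · rw [if_neg hbs, if_pos hbt] at heq
      exfalso
      have hbs' : Gb s = false := by simpa using hbs
      have hgas : Ga (s.image π) = true := by
        cases h : Ga (s.image π) with
        | true => rfl
        | false => exact absurd (h.trans hbs'.symm) hsne
      have hgat : Ga (t.image π) = false := by
        cases h : Ga (t.image π) with
        | false => rfl
        | true => exact absurd (h.trans hbt.symm) htne
      have hinv := haut t htP
      rw [hgat, hbt] at hinv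
      have : Ga t = true := heq ▸ hgas
      rw [this] at hinv
      simp at hinv
    · rw [if_neg hbs, if_neg hbt] at heq
      exact Finset.image_injective π.injective heq
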